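/- Let x₁, …, xₙ be i.i.d. random variables with values in a measurable space, e a square-integrable function, and Ψ₁, …, Ψ_N measurable functions with 𝔼[Ψ_j(x₁)·Ψ_k(x₁)] = δ_{jk} and 𝔼[Ψ_j(x₁)·e(x₁)] = 0 for all j, k. If sup_x Σ_{j=1}^N Ψ_j(x)² ≤ K, then 𝔼[ Σ_{j=1}^N ( (1/n) Σ_{i=1}^n Ψ_j(xᵢ)·e(xᵢ) )² ] ≤ (K/n)·𝔼[e(x₁)²]. -/

import Mathlib

open MeasureTheory ProbabilityTheory

lemma aux15 {Ω : Type*} [MeasurableSpace Ω] (μ : Measure Ω) [IsProbabilityMeasure μ]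
    (n N : ℕ) (Y : Fin N → Fin n → Ω → ℝ) (i0 : Fin n)
    (hmeas : ∀ j i, Measurable (Y j i))
    (hid : ∀ j i, IdentDistrib (Y j i) (Y j i0) μ μ)
    (hsq0 : ∀ j, Integrable (fun ω => (Y j i0 ω)^2) μ)
    (hmean : ∀ j i, ∫ ω, Y j i ω ∂μ = 0)
    (hindY : ∀ j (i i' : Fin n), i ≠ i' → IndepFun (Y j i) (Y j i') μ) :
    ∫ ω, ∑ j, ((1/(n:ℝ)) * ∑ i, Y j i ω)^2 ∂μ
      = (1/(n:ℝ)) * ∫ ω, ∑ j, (Y j i0 ω)^2 ∂μ := by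
  have hsq : ∀ j i, Integrable (fun ω => (Y j i ω)^2) μ := fun j i =>
    ((hid j i).comp (measurable_id.pow_const 2)).integrable_iff.2 (hsq0 j)
  have hprod : ∀ j (i i' : Fin n), Integrable (fun ω => Y j i ω * Y j i' ω) μ := by
    intro j i i'
    refine (((hsq j i).add (hsq j i')).div_const 2).mono'
      (((hmeas j i).mul (hmeas j i')).aestronglyMeasurable) ?_
    filter_upwards with ω
    simp only [Pi.add_apply]
    rw [Real.norm_eq_abs, abs_mul]
    nlinarith [sq_nonneg (|Y j i ω| - |Y j i' ω|), sq_abs (Y j i ω), sq_abs (Y j i' ω)]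
  have hcross : ∀ j (i i' : Fin n), i ≠ i' → ∫ ω, Y j i ω * Y j i' ω ∂μ = 0 := by
    intro j i i' hii
    rw [(hindY j i i' hii).integral_fun_mul_eq_mul_integral (hmeas j i).aestronglyMeasurable
      (hmeas j i').aestronglyMeasurable, hmean, hmean, mul_zero]
  have hexp : ∀ j, (fun ω => ((1/(n:ℝ)) * ∑ i, Y j i ω)^2)
      = fun ω => (1/(n:ℝ))^2 * ∑ i, ∑ i', Y j i ω * Y j i' ω := by
    intro j; funext ω
    rw [mul_pow, sq (∑ i, Y j i ω), Finset.sum_mul_sum]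
  have hS : ∀ j, Integrable (fun ω => ((1/(n:ℝ)) * ∑ i, Y j i ω)^2) μ := by
    intro j
    rw [hexp j]
    exact (integrable_finset_sum _ fun i _ =>
      integrable_finset_sum _ fun i' _ => hprod j i i').const_mul _
  have key : ∀ j, ∫ ω, ((1/(n:ℝ)) * ∑ i, Y j i ω)^2 ∂μ
      = (1/(n:ℝ))^2 * ((n:ℝ) * ∫ ω, (Y j i0 ω)^2 ∂μ) := by
    intro j
    rw [hexp j, integral_const_mul,
      integral_finset_sum _ (fun i _ => integrable_finset_sum _ fun i' _ => hprod j i i')]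
    congr 1
    have h2 : ∀ i : Fin n, ∫ ω, ∑ i', Y j i ω * Y j i' ω ∂μ = ∫ ω, (Y j i0 ω)^2 ∂μ := by
      intro i
      rw [integral_finset_sum _ (fun i' _ => hprod j i i'),
        Finset.sum_eq_single i (fun i' _ h => hcross j i i' (Ne.symm h)) (by simp)]
      have h3 : ∫ ω, Y j i ω * Y j i ω ∂μ = ∫ ω, (Y j i ω)^2 ∂μ := by
        congr 1; funext ω; ring
      rw [h3]
      exact ((hid j i).comp (measurable_id.pow_const 2)).integral_eq
    rw [Finset.sum_congr rfl fun i _ => h2 i]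
    simp [Finset.sum_const, nsmul_eq_mul, Finset.card_univ]
  rw [integral_finset_sum _ (fun j _ => hS j),
    Finset.sum_congr rfl fun j _ => key j,
    integral_finset_sum _ (fun j _ => hsq0 j), Finset.mul_sum]
  apply Finset.sum_congr rfl
  intro j _
  have h : 0 < n := lt_of_le_of_lt (Nat.zero_le _) i0.2
  have hn' : (n:ℝ) ≠ 0 := Nat.cast_ne_zero.2 h.ne'
  field_simp

theorem stmt_15 {Ω : Type*} [MeasurableSpace Ω] (μ : Measure Ω) [IsProbabilityMeasure μ]
    {α : Type*} [MeasurableSpace α]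
    (n N : ℕ) (hn : 0 < n)
    (X : Fin n → Ω → α) (hXmeas : ∀ i, Measurable (X i))
    (hindep : iIndepFun X μ)
    (hXid : ∀ i, IdentDistrib (X i) (X ⟨0, hn⟩) μ μ)
    (e : α → ℝ) (he : Measurable e)
    (heL2 : Integrable (fun ω => e (X ⟨0, hn⟩ ω) ^ 2) μ)
    (Ψ : Fin N → α → ℝ) (hΨmeas : ∀ j, Measurable (Ψ j))
    (hΨon : ∀ j k, ∫ ω, Ψ j (X ⟨0, hn⟩ ω) * Ψ k (X ⟨0, hn⟩ ω) ∂μ = if j = k then 1 else 0)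
    (hΨe : ∀ j, ∫ ω, Ψ j (X ⟨0, hn⟩ ω) * e (X ⟨0, hn⟩ ω) ∂μ = 0)
    (K : ℝ) (hK : ∀ x, ∑ j, Ψ j x ^ 2 ≤ K) :
    ∫ ω, ∑ j, ((1 / (n : ℝ)) * ∑ i, Ψ j (X i ω) * e (X i ω)) ^ 2 ∂μ ≤
      (K / n) * ∫ ω, e (X ⟨0, hn⟩ ω) ^ 2 ∂μ := by
  set i0 : Fin n := ⟨0, hn⟩ with hi0
  have hK0 : ∀ (j : Fin N) (x : α), Ψ j x ^ 2 ≤ K := fun j x =>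
    le_trans (Finset.single_le_sum (fun k _ => sq_nonneg (Ψ k x)) (Finset.mem_univ j)) (hK x)
  have hYmeas : ∀ (j : Fin N) (i : Fin n),
      Measurable (fun ω => Ψ j (X i ω) * e (X i ω)) := fun j i =>
    ((hΨmeas j).comp (hXmeas i)).mul (he.comp (hXmeas i))
  have hsq0 : ∀ j : Fin N, Integrable (fun ω => (Ψ j (X i0 ω) * e (X i0 ω)) ^ 2) μ := by
    intro j
    refine (heL2.const_mul K).mono' ((hYmeas j i0).pow_const 2).aestronglyMeasurable ?_
    filter_upwards with ω
    rw [Real.norm_eq_abs, abs_of_nonneg (sq_nonneg _)]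
    calc (Ψ j (X i0 ω) * e (X i0 ω)) ^ 2 = Ψ j (X i0 ω) ^ 2 * e (X i0 ω) ^ 2 := by ring
      _ ≤ K * e (X i0 ω) ^ 2 := mul_le_mul_of_nonneg_right (hK0 j _) (sq_nonneg _)
  have hmain : ∫ ω, ∑ j, ((1 / (n : ℝ)) * ∑ i, Ψ j (X i ω) * e (X i ω)) ^ 2 ∂μ
      = (1 / (n : ℝ)) * ∫ ω, ∑ j, (Ψ j (X i0 ω) * e (X i0 ω)) ^ 2 ∂μ := by
    refine aux15 μ n N (fun j i ω => Ψ j (X i ω) * e (X i ω)) i0 hYmeas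
      (fun j i => (hXid i).comp ((hΨmeas j).mul he)) hsq0
      (fun j i => ?_) (fun j i i' hii =>
        (hindep.indepFun hii).comp ((hΨmeas j).mul he) ((hΨmeas j).mul he))
    have h1 : ∫ ω, Ψ j (X i ω) * e (X i ω) ∂μ = ∫ ω, Ψ j (X i0 ω) * e (X i0 ω) ∂μ :=
      ((hXid i).comp ((hΨmeas j).mul he)).integral_eq
    rw [h1]; exact hΨe j
  rw [hmain]
  have hbound : ∫ ω, ∑ j, (Ψ j (X i0 ω) * e (X i0 ω)) ^ 2 ∂μ
      ≤ K * ∫ ω, e (X i0 ω) ^ 2 ∂μ := by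
    rw [← integral_const_mul]
    refine integral_mono (integrable_finset_sum _ fun j _ => hsq0 j) (heL2.const_mul K) ?_
    intro ω
    calc ∑ j, (Ψ j (X i0 ω) * e (X i0 ω)) ^ 2
        = (∑ j, Ψ j (X i0 ω) ^ 2) * e (X i0 ω) ^ 2 := by
          rw [Finset.sum_mul]; exact Finset.sum_congr rfl fun j _ => by ring
      _ ≤ K * e (X i0 ω) ^ 2 := mul_le_mul_of_nonneg_right (hK _) (sq_nonneg _)
  calc (1 / (n : ℝ)) * ∫ ω, ∑ j, (Ψ j (X i0 ω) * e (X i0 ω)) ^ 2 ∂μ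
      ≤ (1 / (n : ℝ)) * (K * ∫ ω, e (X i0 ω) ^ 2 ∂μ) :=
        mul_le_mul_of_nonneg_left hbound (by positivity)
    _ = (K / n) * ∫ ω, e (X i0 ω) ^ 2 ∂μ := by ring
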